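/- Let n < m be positive integers with n even. Then: (i) for every finite simple graph W with at least one vertex, t(P_n, W) ≥ t(P_m, W)^{(n+1)/(m+1)}; and (ii) for every real c < (n+1)/(m+1) there exists a finite simple graph W with t(P_m, W) > 0 and t(P_n, W) < t(P_m, W)^c. (That is, ρ(P_m, P_n) = (n+1)/(m+1) when n < m and n is even.) -/

import Mathlib

open Finset

section counting
variable {β : Type} [Fintype β]

/-- Homs from the path graph are functions satisfying consecutive adjacency. -/
def pathHomEquiv (W : SimpleGraph β) (k : ℕ) :
    (SimpleGraph.pathGraph (k + 1) →g W) ≃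
      {f : Fin (k + 1) → β // ∀ i : Fin k, W.Adj (f i.castSucc) (f i.succ)} where
  toFun φ := ⟨⇑φ, fun i => φ.map_adj (by
    rw [SimpleGraph.pathGraph_adj]; left; simp)⟩
  invFun f := ⟨f.1, by
    intro u v h
    rcases SimpleGraph.pathGraph_adj.mp h with h | h
    · have hu : u.val < k := by omega
      have h1 : (⟨u.val, hu⟩ : Fin k).castSucc = u := by ext; simp
      have h2 : (⟨u.val, hu⟩ : Fin k).succ = v := by ext; simpa using h
      rw [← h1, ← h2]
      exact f.2 _
    · have hv : v.val < k := by omega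
      have h1 : (⟨v.val, hv⟩ : Fin k).castSucc = v := by ext; simp
      have h2 : (⟨v.val, hv⟩ : Fin k).succ = u := by ext; simpa using h
      rw [← h1, ← h2]
      exact (f.2 _).symm⟩
  left_inv φ := rfl
  right_inv f := rfl

end counting

section pathsum
variable {β : Type} [Fintype β] [DecidableEq β]

lemma sum_prod_eq (A : Matrix β β ℝ) : ∀ (k : ℕ) (b : β),
    (∑ g : Fin (k + 1) → β,
      if g 0 = b then ∏ i : Fin k, A (g i.castSucc) (g i.succ) else 0)
      = ∑ j, (A ^ k) b j := by
  intro k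
  induction k with
  | zero =>
    intro b
    rw [← (Equiv.funUnique (Fin 1) β).symm.sum_comp]
    simp [Matrix.one_apply, eq_comm]
  | succ k ih =>
    intro b
    rw [← ((Fin.consEquiv (fun _ : Fin (k + 2) => β)).sum_comp
      (fun g => if g 0 = b then ∏ i : Fin (k + 1), A (g i.castSucc) (g i.succ) else 0))]
    rw [Fintype.sum_prod_type]
    simp only [Fin.consEquiv_apply, Fin.cons_zero]
    have hstep : ∀ x : β,
        (∑ g' : Fin (k + 1) → β,
          if x = b then ∏ i : Fin (k + 1), A ((Fin.cons x g' : Fin (k+2) → β) i.castSucc) ((Fin.cons x g' : Fin (k+2) → β) i.succ) else 0)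
        = if x = b then (∑ g' : Fin (k + 1) → β, ∏ i : Fin (k + 1), A ((Fin.cons x g' : Fin (k+2) → β) i.castSucc) ((Fin.cons x g' : Fin (k+2) → β) i.succ)) else 0 := by
      intro x; split <;> simp
    rw [Finset.sum_congr rfl fun x _ => hstep x, Finset.sum_ite_eq' Finset.univ b, if_pos (Finset.mem_univ b)]
    have hprod : ∀ g' : Fin (k + 1) → β,
        (∏ i : Fin (k + 1), A ((Fin.cons b g' : Fin (k+2) → β) i.castSucc) ((Fin.cons b g' : Fin (k+2) → β) i.succ))
        = A b (g' 0) * ∏ i : Fin k, A (g' i.castSucc) (g' i.succ) := by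
      intro g'
      rw [Fin.prod_univ_succ]
      simp [← Fin.succ_castSucc]
    rw [Finset.sum_congr rfl fun g' _ => hprod g']
    have hsplit : ∀ g' : Fin (k + 1) → β,
        A b (g' 0) * ∏ i : Fin k, A (g' i.castSucc) (g' i.succ)
        = ∑ a : β, if g' 0 = a then A b a * ∏ i : Fin k, A (g' i.castSucc) (g' i.succ) else 0 := by
      intro g'
      rw [Finset.sum_ite_eq Finset.univ (g' 0), if_pos (Finset.mem_univ _)]
    rw [Finset.sum_congr rfl fun g' _ => hsplit g', Finset.sum_comm]
    have hpull : ∀ a : β,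
        (∑ g' : Fin (k + 1) → β, if g' 0 = a then A b a * ∏ i : Fin k, A (g' i.castSucc) (g' i.succ) else 0)
        = A b a * ∑ j, (A ^ k) a j := by
      intro a
      rw [← ih a, Finset.mul_sum]
      exact Finset.sum_congr rfl fun g' _ => by rw [mul_ite, mul_zero]
    rw [Finset.sum_congr rfl fun a _ => hpull a]
    rw [pow_succ']
    simp_rw [Matrix.mul_apply, Finset.mul_sum]
    exact Finset.sum_comm

lemma sum_prod_total (A : Matrix β β ℝ) (k : ℕ) :
    (∑ g : Fin (k + 1) → β, ∏ i : Fin k, A (g i.castSucc) (g i.succ))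
      = ∑ b, ∑ j, (A ^ k) b j := by
  have h : ∀ g : Fin (k + 1) → β,
      (∏ i : Fin k, A (g i.castSucc) (g i.succ))
      = ∑ b : β, if g 0 = b then ∏ i : Fin k, A (g i.castSucc) (g i.succ) else 0 := by
    intro g
    rw [Finset.sum_ite_eq Finset.univ (g 0), if_pos (Finset.mem_univ _)]
  rw [Finset.sum_congr rfl fun g _ => h g, Finset.sum_comm]
  exact Finset.sum_congr rfl fun b _ => sum_prod_eq A k b

lemma card_pathHom (W : SimpleGraph β) [DecidableRel W.Adj] (k : ℕ) :
    (Nat.card (SimpleGraph.pathGraph (k + 1) →g W) : ℝ)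
      = ∑ i, ∑ j, ((W.adjMatrix ℝ) ^ k) i j := by
  rw [Nat.card_congr (pathHomEquiv W k), Nat.card_eq_fintype_card]
  rw [Fintype.card_subtype]
  rw [← sum_prod_total]
  rw [Finset.card_filter]
  push_cast
  refine Finset.sum_congr rfl fun f _ => ?_
  simp [SimpleGraph.adjMatrix_apply, Fintype.prod_boole]

lemma pow_entry_nonneg (W : SimpleGraph β) [DecidableRel W.Adj] (k : ℕ) :
    ∀ i j, 0 ≤ ((W.adjMatrix ℝ) ^ k) i j := by
  induction k with
  | zero => intro i j; simp [Matrix.one_apply]; positivity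
  | succ k ih =>
    intro i j
    rw [pow_succ, Matrix.mul_apply]
    refine Finset.sum_nonneg fun a _ => mul_nonneg (ih i a) ?_
    simp [SimpleGraph.adjMatrix_apply]
    positivity

end pathsum

section spectral
open RealInnerProductSpace
variable {β : Type} [Fintype β] [DecidableEq β]

private lemma inner_eq (x y : EuclideanSpace ℝ β) : ⟪x, y⟫ = ∑ i, x i * y i := by
  simp [PiLp.inner_apply]
  exact Finset.sum_congr rfl fun i _ => mul_comm _ _

noncomputable def adjT (W : SimpleGraph β) [DecidableRel W.Adj] :
    EuclideanSpace ℝ β →ₗ[ℝ] EuclideanSpace ℝ β :=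
  Matrix.toEuclideanLin (W.adjMatrix ℝ)

lemma toEuclideanLin_pow (A : Matrix β β ℝ) (k : ℕ) :
    (Matrix.toEuclideanLin A) ^ k = Matrix.toEuclideanLin (A ^ k) := by
  induction k with
  | zero =>
    refine LinearMap.ext fun x => ?_
    rw [pow_zero, pow_zero, Matrix.toEuclideanLin_apply, Matrix.one_mulVec]
    exact ((WithLp.equiv 2 (β → ℝ)).symm_apply_apply x).symm ▸ rfl
  | succ k ih =>
    refine LinearMap.ext fun x => ?_
    rw [pow_succ, Module.End.mul_apply, ih, Matrix.toEuclideanLin_apply,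
      Matrix.toEuclideanLin_apply, Matrix.toEuclideanLin_apply,
      WithLp.ofLp_toLp, Matrix.mulVec_mulVec, ← pow_succ]

lemma adjT_pow_apply (W : SimpleGraph β) [DecidableRel W.Adj] (k : ℕ)
    (x : EuclideanSpace ℝ β) (j : β) :
    ((adjT W ^ k) x) j = ∑ l, ((W.adjMatrix ℝ) ^ k) j l * x l := by
  rw [adjT, toEuclideanLin_pow, Matrix.toEuclideanLin_apply]
  simp [Matrix.mulVec, dotProduct]

lemma adjT_isSymmetric (W : SimpleGraph β) [DecidableRel W.Adj] :
    (adjT W).IsSymmetric := by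
  intro x y
  have h1 : ∀ (z : EuclideanSpace ℝ β) (j : β),
      (adjT W z) j = ∑ l, (W.adjMatrix ℝ) j l * z l := by
    intro z j
    have := adjT_pow_apply W 1 z j
    simpa using this
  rw [inner_eq, inner_eq]
  simp_rw [h1, Finset.sum_mul, Finset.mul_sum]
  rw [Finset.sum_comm]
  refine Finset.sum_congr rfl fun j _ => Finset.sum_congr rfl fun l _ => ?_
  have : (W.adjMatrix ℝ) j l = (W.adjMatrix ℝ) l j := by
    rw [SimpleGraph.adjMatrix_apply, SimpleGraph.adjMatrix_apply]
    exact if_congr (W.adj_comm j l) rfl rfl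
  rw [this]; ring

set_option maxHeartbeats 1000000 in
lemma key_ineq (W : SimpleGraph β) [Nonempty β] [DecidableRel W.Adj]
    {n m : ℕ} (hne : Even n) (hnm : n ≤ m) :
    (∑ i, ∑ j, ((W.adjMatrix ℝ) ^ m) i j) ^ (n + 1)
      ≤ (∑ i, ∑ j, ((W.adjMatrix ℝ) ^ n) i j) ^ (m + 1) := by
  set A := W.adjMatrix ℝ with hA
  have hAnn : ∀ i j, 0 ≤ A i j := fun i j => by
    rw [hA, SimpleGraph.adjMatrix_apply]; positivity
  have hAle : ∀ i j, A i j ≤ 1 := fun i j => by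
    rw [hA, SimpleGraph.adjMatrix_apply]; split <;> norm_num
  set T := adjT W with hT
  have hsym : T.IsSymmetric := adjT_isSymmetric W
  have hsymk : ∀ k, (T ^ k).IsSymmetric := fun k => hsym.pow k
  have happ : ∀ (k : ℕ) (x : EuclideanSpace ℝ β) (j : β),
      ((T ^ k) x) j = ∑ l, (A ^ k) j l * x l := adjT_pow_apply W
  have happ1 : ∀ (x : EuclideanSpace ℝ β) (j : β),
      (T x) j = ∑ l, A j l * x l := by
    intro x j
    have := happ 1 x j
    simpa using this
  set oneE : EuclideanSpace ℝ β := (WithLp.equiv 2 (β → ℝ)).symm (fun _ => 1) with honeE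
  have honec : ∀ j, oneE j = 1 := fun j => rfl
  set w : ℕ → ℝ := fun k => ⟪oneE, (T ^ k) oneE⟫ with hw
  have hwsum : ∀ k, w k = ∑ i, ∑ j, (A ^ k) i j := by
    intro k
    simp only [hw]
    rw [inner_eq]
    refine Finset.sum_congr rfl fun i _ => ?_
    rw [happ, honec, one_mul]
    exact Finset.sum_congr rfl fun j _ => by rw [honec, mul_one]
  -- eigen decomposition
  have hcard : 0 < Fintype.card β := Fintype.card_pos
  haveI : Nonempty (Fin (Fintype.card β)) := ⟨⟨0, hcard⟩⟩
  set b := hsym.eigenvectorBasis finrank_euclideanSpace with hb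
  set μ := hsym.eigenvalues finrank_euclideanSpace with hμ
  have happly : ∀ i, T (b i) = μ i • b i := fun i => hsym.apply_eigenvectorBasis _ i
  have happlyk : ∀ (k : ℕ) i, (T ^ k) (b i) = (μ i ^ k) • b i := by
    intro k
    induction k with
    | zero => intro i; simp
    | succ k ih =>
      intro i
      rw [pow_succ, Module.End.mul_apply, happly, map_smul, ih, smul_smul, ← pow_succ']
  have hexp : ∀ (k : ℕ) (x : EuclideanSpace ℝ β),
      ⟪x, (T ^ k) x⟫ = ∑ i, μ i ^ k * ⟪b i, x⟫ ^ 2 := by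
    intro k x
    rw [← b.sum_inner_mul_inner x ((T ^ k) x)]
    refine Finset.sum_congr rfl fun i _ => ?_
    have h1 : ⟪b i, (T ^ k) x⟫ = μ i ^ k * ⟪b i, x⟫ := by
      rw [← hsymk k (b i) x, happlyk k i, real_inner_smul_left]
    rw [h1, real_inner_comm x (b i)]
    ring
  have hnormsq : ∀ x : EuclideanSpace ℝ β, ⟪x, x⟫ = ∑ i, ⟪b i, x⟫ ^ 2 := by
    intro x
    have := hexp 0 x
    simpa using this
  -- spectral radius
  set l1 := Finset.univ.sup' Finset.univ_nonempty (fun i => |μ i|) with hl1def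
  have hl1 : ∀ i, |μ i| ≤ l1 := fun i => by
    rw [hl1def]; exact Finset.le_sup' (fun j : Fin (Fintype.card β) => |μ j|) (Finset.mem_univ i)
  obtain ⟨i0, -, hi0⟩ := Finset.exists_mem_eq_sup' (Finset.univ_nonempty (α := Fin (Fintype.card β))) (fun i : Fin (Fintype.card β) => |μ i|)
  have hl1nonneg : 0 ≤ l1 := by rw [hl1def, hi0]; exact abs_nonneg _
  have hquad : ∀ (k : ℕ) (x : EuclideanSpace ℝ β), ⟪x, (T ^ k) x⟫ ≤ l1 ^ k * ⟪x, x⟫ := by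
    intro k x
    rw [hexp, hnormsq, Finset.mul_sum]
    refine Finset.sum_le_sum fun i _ => ?_
    have hle : μ i ^ k ≤ l1 ^ k :=
      calc μ i ^ k ≤ |μ i ^ k| := le_abs_self _
        _ = |μ i| ^ k := abs_pow _ _
        _ ≤ l1 ^ k := pow_le_pow_left₀ (abs_nonneg _) (hl1 i) k
    exact mul_le_mul_of_nonneg_right hle (sq_nonneg _)
  -- Perron eigenvector
  set v : EuclideanSpace ℝ β := b i0 with hv
  set u : EuclideanSpace ℝ β := (WithLp.equiv 2 (β → ℝ)).symm (fun j => |v j|) with hu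
  have huc : ∀ j, u j = |v j| := fun j => rfl
  have hunn : ∀ j, (0:ℝ) ≤ u j := fun j => (huc j) ▸ abs_nonneg _
  have hvv : ⟪v, v⟫ = 1 := by
    rw [real_inner_self_eq_norm_sq, b.orthonormal.1 i0, one_pow]
  have huu : ⟪u, u⟫ = 1 := by
    rw [inner_eq, ← hvv, inner_eq]
    exact Finset.sum_congr rfl fun j _ => by rw [huc, abs_mul_abs_self]
  have hvTv : ⟪v, T v⟫ = μ i0 := by
    rw [happly, real_inner_smul_right, hvv, mul_one]
  have habs : l1 ≤ ⟪u, T u⟫ := by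
    have h0 : l1 = |⟪v, T v⟫| := by rw [hvTv, hl1def, hi0]
    rw [h0, inner_eq, inner_eq]
    simp_rw [happ1]
    calc |∑ j, v j * ∑ l, A j l * v l| ≤ ∑ j, |v j * ∑ l, A j l * v l| :=
          Finset.abs_sum_le_sum_abs _ _
      _ ≤ ∑ j, u j * ∑ l, A j l * u l := by
          refine Finset.sum_le_sum fun j _ => ?_
          rw [abs_mul, ← huc j]
          refine mul_le_mul_of_nonneg_left ?_ (hunn j)
          calc |∑ l, A j l * v l| ≤ ∑ l, |A j l * v l| := Finset.abs_sum_le_sum_abs _ _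
            _ = ∑ l, A j l * u l := by
                refine Finset.sum_congr rfl fun l _ => ?_
                rw [abs_mul, abs_of_nonneg (hAnn j l), huc]
  have hub : ⟪u, T u⟫ ≤ l1 := by
    have h := hquad 1 u
    rw [pow_one, huu, mul_one, pow_one] at h
    exact h
  have hueq : ⟪u, T u⟫ = l1 := le_antisymm hub habs
  have hsum0 : ∑ i, (l1 - μ i) * ⟪b i, u⟫ ^ 2 = 0 := by
    have h1 : ⟪u, (T ^ 1) u⟫ = ∑ i, μ i ^ 1 * ⟪b i, u⟫ ^ 2 := hexp 1 u
    rw [pow_one] at h1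
    simp_rw [pow_one] at h1
    simp_rw [sub_mul, Finset.sum_sub_distrib, ← Finset.mul_sum, ← hnormsq, huu, mul_one,
      ← h1, hueq, sub_self]
  have hterm : ∀ i, (l1 - μ i) * ⟪b i, u⟫ ^ 2 = 0 := by
    have hnn : ∀ i ∈ Finset.univ, (0:ℝ) ≤ (l1 - μ i) * ⟪b i, u⟫ ^ 2 := by
      intro i _
      refine mul_nonneg (sub_nonneg.mpr ?_) (sq_nonneg _)
      exact le_trans (le_abs_self _) (hl1 i)
    intro i
    exact (Finset.sum_eq_zero_iff_of_nonneg hnn).mp hsum0 i (Finset.mem_univ i)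
  have hTu : T u = l1 • u := by
    conv_lhs => rw [← b.sum_repr' u]
    conv_rhs => rw [← b.sum_repr' u]
    rw [map_sum, Finset.smul_sum]
    refine Finset.sum_congr rfl fun i _ => ?_
    rw [map_smul, happly, smul_smul, smul_smul]
    rcases mul_eq_zero.mp (hterm i) with h | h
    · rw [sub_eq_zero] at h
      rw [← h]
      ring_nf
    · rw [pow_eq_zero_iff (two_ne_zero)] at h
      rw [h]
      simp
  have hTku : ∀ k : ℕ, (T ^ k) u = (l1 ^ k) • u := by
    intro k
    induction k with
    | zero => simp
    | succ k ih => rw [pow_succ, Module.End.mul_apply, hTu, map_smul, ih, smul_smul, ← pow_succ']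
  obtain ⟨r, hr⟩ := hne
  have huone : ⟪oneE, u⟫ = ∑ j, u j := by
    rw [inner_eq]
    exact Finset.sum_congr rfl fun j _ => by rw [honec, one_mul]
  have hl1u : l1 ≤ ⟪oneE, u⟫ ^ 2 := by
    rw [← hueq, huone]
    have h1 : ⟪u, T u⟫ ≤ (∑ j, u j) * (∑ j, u j) := by
      rw [inner_eq]
      simp_rw [happ1]
      rw [Finset.sum_mul]
      refine Finset.sum_le_sum fun j _ => ?_
      refine mul_le_mul_of_nonneg_left ?_ (hunn j)
      refine Finset.sum_le_sum fun l _ => ?_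
      calc A j l * u l ≤ 1 * u l := mul_le_mul_of_nonneg_right (hAle j l) (hunn l)
        _ = u l := one_mul _
    calc ⟪u, T u⟫ ≤ (∑ j, u j) * (∑ j, u j) := h1
      _ = (∑ j, u j) ^ 2 := (sq _).symm
  have hTn : w n = ⟪(T ^ r) oneE, (T ^ r) oneE⟫ := by
    simp only [hw]
    have : (T ^ n) oneE = (T ^ r) ((T ^ r) oneE) := by
      rw [hr, pow_add, Module.End.mul_apply]
    rw [this, ← hsymk r oneE ((T ^ r) oneE)]
  have hwn0 : 0 ≤ w n := by
    rw [hwsum]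
    exact Finset.sum_nonneg fun i _ => Finset.sum_nonneg fun j _ => pow_entry_nonneg W n i j
  have hwm0 : 0 ≤ w m := by
    rw [hwsum]
    exact Finset.sum_nonneg fun i _ => Finset.sum_nonneg fun j _ => pow_entry_nonneg W m i j
  have hperron : l1 ^ (n + 1) ≤ w n := by
    have hcs : ⟪(T ^ r) oneE, u⟫ * ⟪(T ^ r) oneE, u⟫
        ≤ ⟪(T ^ r) oneE, (T ^ r) oneE⟫ * ⟪u, u⟫ := real_inner_mul_inner_self_le _ _
    rw [huu, mul_one, ← hTn] at hcs
    have h2 : ⟪(T ^ r) oneE, u⟫ = l1 ^ r * ⟪oneE, u⟫ := by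
      rw [hsymk r oneE u, hTku r, real_inner_smul_right]
    rw [h2] at hcs
    calc l1 ^ (n + 1) = (l1 ^ r * l1 ^ r) * l1 := by
          rw [← pow_add, ← pow_succ, hr]
      _ ≤ (l1 ^ r * l1 ^ r) * ⟪oneE, u⟫ ^ 2 := by
          refine mul_le_mul_of_nonneg_left hl1u (by positivity)
      _ = (l1 ^ r * ⟪oneE, u⟫) * (l1 ^ r * ⟪oneE, u⟫) := by ring
      _ ≤ w n := hcs
  have hupper : w m ≤ l1 ^ (m - n) * w n := by
    have hm : m = r + ((m - n) + r) := by omega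
    have hsplit : (T ^ m) oneE = (T ^ r) ((T ^ (m - n)) ((T ^ r) oneE)) := by
      have hpow : T ^ m = T ^ r * (T ^ (m - n) * T ^ r) := by
        rw [← pow_add, ← pow_add, ← hm]
      rw [hpow, Module.End.mul_apply, Module.End.mul_apply]
    have : w m = ⟪(T ^ r) oneE, (T ^ (m - n)) ((T ^ r) oneE)⟫ := by
      simp only [hw]
      rw [hsplit, ← hsymk r oneE _]
    rw [this]
    calc ⟪(T ^ r) oneE, (T ^ (m - n)) ((T ^ r) oneE)⟫
        ≤ l1 ^ (m - n) * ⟪(T ^ r) oneE, (T ^ r) oneE⟫ := hquad _ _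
      _ = l1 ^ (m - n) * w n := by rw [hTn]
  calc (∑ i, ∑ j, (A ^ m) i j) ^ (n + 1) = (w m) ^ (n + 1) := by rw [hwsum]
    _ ≤ (l1 ^ (m - n) * w n) ^ (n + 1) := pow_le_pow_left₀ hwm0 hupper _
    _ = (l1 ^ (n + 1)) ^ (m - n) * (w n) ^ (n + 1) := by
        rw [mul_pow, ← pow_mul, mul_comm (m - n) (n + 1), pow_mul]
    _ ≤ (w n) ^ (m - n) * (w n) ^ (n + 1) := by
        refine mul_le_mul_of_nonneg_right (pow_le_pow_left₀ (by positivity) hperron _) (by positivity)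
    _ = (w n) ^ (m + 1) := by rw [← pow_add]; congr 1; omega
    _ = (∑ i, ∑ j, (A ^ n) i j) ^ (m + 1) := by rw [hwsum]

end spectral

section example2
open Matrix

noncomputable def twoGraph (K : ℕ) : SimpleGraph (Fin (K + 2)) :=
  SimpleGraph.fromRel (fun i j => i = 0 ∧ j = 1)

lemma twoGraph_adj {K : ℕ} (i j : Fin (K + 2)) :
    (twoGraph K).Adj i j ↔ ((i = 0 ∧ j = 1) ∨ (i = 1 ∧ j = 0)) := by
  have h01 : (0 : Fin (K + 2)) ≠ 1 := by simp [Fin.ext_iff]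
  rw [twoGraph, SimpleGraph.fromRel_adj]
  constructor
  · rintro ⟨-, h | h⟩
    · exact Or.inl h
    · exact Or.inr ⟨h.2, h.1⟩
  · rintro (⟨h1, h2⟩ | ⟨h1, h2⟩)
    · subst h1; subst h2; exact ⟨h01, Or.inl ⟨rfl, rfl⟩⟩
    · subst h1; subst h2; exact ⟨h01.symm, Or.inr ⟨rfl, rfl⟩⟩

lemma twoGraph_count {K : ℕ} (k : ℕ) (hk : 0 < k) [DecidableRel (twoGraph K).Adj] :
    (Nat.card (SimpleGraph.pathGraph (k + 1) →g twoGraph K) : ℝ) = 2 := by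
  classical
  have h01 : (0 : Fin (K + 2)) ≠ 1 := by simp [Fin.ext_iff]
  rw [card_pathHom]
  set A := (twoGraph K).adjMatrix ℝ with hA
  have hAij : ∀ i j, A i j = if (i = 0 ∧ j = 1) ∨ (i = 1 ∧ j = 0) then 1 else 0 := by
    intro i j
    rw [hA, SimpleGraph.adjMatrix_apply]
    exact if_congr (twoGraph_adj i j) rfl rfl
  set χ : Fin (K + 2) → ℝ := fun i => if i = 0 ∨ i = 1 then 1 else 0 with hχ
  have hrow : ∀ i, (∑ j, A i j) = χ i := by
    intro i
    simp only [hAij, hχ]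
    by_cases hi0 : i = 0
    · subst hi0; simp [h01]
    · by_cases hi1 : i = 1
      · subst hi1; simp [h01, h01.symm, Ne.symm h01]
      · simp [hi0, hi1]
  have hrowχ : ∀ i, (∑ j, A i j * χ j) = χ i := by
    intro i
    have hterm : ∀ j, A i j * χ j = A i j := by
      intro j
      rw [hAij, hχ]
      by_cases h : (i = 0 ∧ j = 1) ∨ (i = 1 ∧ j = 0)
      · rcases h with ⟨h1, h2⟩ | ⟨h1, h2⟩ <;> subst h2 <;> simp
      · simp [h]
    rw [Finset.sum_congr rfl fun j _ => hterm j]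
    exact hrow i
  have h1v : A *ᵥ (fun _ => (1:ℝ)) = χ := by
    funext i
    simp only [Matrix.mulVec, dotProduct, mul_one]
    exact hrow i
  have h2v : A *ᵥ χ = χ := by
    funext i
    simp only [Matrix.mulVec, dotProduct]
    exact hrowχ i
  have h3v : ∀ l : ℕ, (A ^ l) *ᵥ χ = χ := by
    intro l
    induction l with
    | zero => rw [pow_zero, Matrix.one_mulVec]
    | succ l ih => rw [pow_succ, ← Matrix.mulVec_mulVec, h2v, ih]
  obtain ⟨k', rfl⟩ : ∃ k', k = k' + 1 := ⟨k - 1, by omega⟩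
  have h4 : (A ^ (k' + 1)) *ᵥ (fun _ => (1:ℝ)) = χ := by
    rw [pow_succ, ← Matrix.mulVec_mulVec, h1v, h3v]
  have h5 : ∀ i, (∑ j, (A ^ (k' + 1)) i j) = χ i := by
    intro i
    have h := congrFun h4 i
    simp only [Matrix.mulVec, dotProduct, mul_one] at h
    exact h
  rw [Finset.sum_congr rfl fun i _ => h5 i]
  have hsplit : ∀ i : Fin (K + 2), χ i = (if i = 0 then (1:ℝ) else 0) + (if i = 1 then 1 else 0) := by
    intro i
    rw [hχ]
    by_cases hi0 : i = 0
    · subst hi0; simp [h01]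
    · by_cases hi1 : i = 1
      · subst hi1; simp [Ne.symm h01]
      · simp [hi0, hi1]
  rw [Finset.sum_congr rfl fun i _ => hsplit i, Finset.sum_add_distrib]
  rw [Finset.sum_ite_eq' Finset.univ (0 : Fin (K+2)) (fun _ => (1:ℝ)),
    Finset.sum_ite_eq' Finset.univ (1 : Fin (K+2)) (fun _ => (1:ℝ))]
  norm_num

end example2

/-- The homomorphism density `t(G, W)`. -/
noncomputable def homDensity {α β : Type} [Fintype α] [Fintype β]
    (G : SimpleGraph α) (W : SimpleGraph β) : ℝ :=
  (Nat.card (G →g W) : ℝ) / (Fintype.card β : ℝ) ^ (Fintype.card α)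

/-- `P n` is the path with `n` edges (on `n + 1` vertices). -/
def pathN (n : ℕ) : SimpleGraph (Fin (n + 1)) := SimpleGraph.pathGraph (n + 1)

theorem stmt_6 (m n : ℕ) (hn : 0 < n) (hnm : n < m) (hne : Even n) :
    (∀ (β : Type) [Fintype β] [Nonempty β] (W : SimpleGraph β),
      homDensity (pathN n) W ≥
        homDensity (pathN m) W ^ (((n : ℝ) + 1) / ((m : ℝ) + 1))) ∧
    (∀ c : ℝ, c < ((n : ℝ) + 1) / ((m : ℝ) + 1) →
      ∃ (N : ℕ) (W : SimpleGraph (Fin N)), 0 < N ∧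
        0 < homDensity (pathN m) W ∧
        homDensity (pathN n) W < homDensity (pathN m) W ^ c) := by
  constructor
  · intro β _ _ W
    classical
    have hkey := key_ineq W hne hnm.le
    have hm' := card_pathHom W m
    have hn' := card_pathHom W n
    set Sm := ∑ i, ∑ j, ((W.adjMatrix ℝ) ^ m) i j with hSm
    set Sn := ∑ i, ∑ j, ((W.adjMatrix ℝ) ^ n) i j with hSn
    have hSm0 : 0 ≤ Sm :=
      Finset.sum_nonneg fun i _ => Finset.sum_nonneg fun j _ => pow_entry_nonneg W m i j
    have hSn0 : 0 ≤ Sn :=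
      Finset.sum_nonneg fun i _ => Finset.sum_nonneg fun j _ => pow_entry_nonneg W n i j
    have hNpos : (0:ℝ) < (Fintype.card β : ℝ) := by exact_mod_cast Fintype.card_pos
    have e1 : homDensity (pathN m) W = Sm / (Fintype.card β : ℝ) ^ (m + 1) := by
      simp only [homDensity, Fintype.card_fin]
      rw [show (Nat.card (pathN m →g W) : ℝ) = Sm from hm']
    have e2 : homDensity (pathN n) W = Sn / (Fintype.card β : ℝ) ^ (n + 1) := by
      simp only [homDensity, Fintype.card_fin]
      rw [show (Nat.card (pathN n →g W) : ℝ) = Sn from hn']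
    have htm0 : 0 ≤ homDensity (pathN m) W := by rw [e1]; positivity
    have htn0 : 0 ≤ homDensity (pathN n) W := by rw [e2]; positivity
    have hpow : homDensity (pathN m) W ^ (n+1) ≤ homDensity (pathN n) W ^ (m+1) := by
      rw [e1, e2, div_pow, div_pow, ← pow_mul, ← pow_mul,
        show (m+1)*(n+1) = (n+1)*(m+1) from mul_comm _ _]
      exact div_le_div_of_nonneg_right hkey (by positivity)
    rw [ge_iff_le]
    calc homDensity (pathN m) W ^ (((n:ℝ)+1)/((m:ℝ)+1))
        = (homDensity (pathN m) W ^ (n+1)) ^ (1/((m:ℝ)+1)) := by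
          rw [← Real.rpow_natCast (homDensity (pathN m) W) (n+1), ← Real.rpow_mul htm0]
          congr 1
          push_cast
          ring
      _ ≤ (homDensity (pathN n) W ^ (m+1)) ^ (1/((m:ℝ)+1)) :=
          Real.rpow_le_rpow (by positivity) hpow (by positivity)
      _ = homDensity (pathN n) W := by
          rw [← Real.rpow_natCast (homDensity (pathN n) W) (m+1), ← Real.rpow_mul htn0,
            show ((m+1:ℕ):ℝ) * (1/((m:ℝ)+1)) = 1 by push_cast; field_simp]
          exact Real.rpow_one _
  · intro c hc
    classical
    have hm1 : (0:ℝ) < (m:ℝ) + 1 := by positivity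
    set e := ((n:ℝ)+1) - c * ((m:ℝ)+1) with he
    have he0 : 0 < e := by
      have h := (lt_div_iff₀ hm1).mp hc
      rw [he]
      linarith
    obtain ⟨K0, hK0⟩ := exists_nat_gt ((2:ℝ) ^ ((1 - c)/e))
    refine ⟨K0 + 2, twoGraph K0, by omega, ?_, ?_⟩
    · have em : homDensity (pathN m) (twoGraph K0) = 2 / ((K0:ℝ)+2) ^ (m + 1) := by
        simp only [homDensity, Fintype.card_fin]
        rw [show (Nat.card (pathN m →g twoGraph K0) : ℝ) = 2 from twoGraph_count m (by omega)]
        push_cast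
        ring
      rw [em]
      positivity
    · have em : homDensity (pathN m) (twoGraph K0) = 2 / ((K0:ℝ)+2) ^ (m + 1) := by
        simp only [homDensity, Fintype.card_fin]
        rw [show (Nat.card (pathN m →g twoGraph K0) : ℝ) = 2 from twoGraph_count m (by omega)]
        push_cast
        ring
      have en : homDensity (pathN n) (twoGraph K0) = 2 / ((K0:ℝ)+2) ^ (n + 1) := by
        simp only [homDensity, Fintype.card_fin]
        rw [show (Nat.card (pathN n →g twoGraph K0) : ℝ) = 2 from twoGraph_count n (by omega)]
        push_cast
        ring
      rw [em, en]
      set x := (K0:ℝ) + 2 with hxdef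
      have hx : (0:ℝ) < x := by positivity
      have hxM : (2:ℝ)^((1-c)/e) < x := lt_of_lt_of_le hK0 (by rw [hxdef]; linarith)
      have h2e : (2:ℝ)^(1-c) < x ^ e := by
        have h := Real.rpow_lt_rpow (Real.rpow_nonneg (by norm_num) _) hxM he0
        rwa [← Real.rpow_mul (by norm_num : (0:ℝ) ≤ 2), div_mul_cancel₀ _ (ne_of_gt he0)] at h
      have hnp : x ^ (n+1) = x ^ ((n:ℝ)+1) := by
        rw [← Real.rpow_natCast x (n+1)]
        push_cast
        ring_nf
      have hmp : x ^ (m+1) = x ^ ((m:ℝ)+1) := by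
        rw [← Real.rpow_natCast x (m+1)]
        push_cast
        ring_nf
      rw [hnp, hmp, Real.div_rpow (by norm_num) (Real.rpow_nonneg hx.le _),
        ← Real.rpow_mul hx.le]
      rw [div_lt_div_iff₀ (Real.rpow_pos_of_pos hx _) (Real.rpow_pos_of_pos hx _)]
      have hxsplit : x ^ ((n:ℝ)+1) = x ^ (((m:ℝ)+1)*c) * x ^ e := by
        rw [← Real.rpow_add hx]
        congr 1
        rw [he]
        ring
      have h2split : (2:ℝ) = 2 ^ c * 2 ^ (1-c) := by
        rw [← Real.rpow_add (by norm_num : (0:ℝ) < 2)]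
        norm_num
      have hp1 : (0:ℝ) < 2 ^ c := Real.rpow_pos_of_pos (by norm_num) _
      have hp2 : (0:ℝ) < x ^ (((m:ℝ)+1)*c) := Real.rpow_pos_of_pos hx _
      calc 2 * x ^ (((m:ℝ)+1)*c) = (2 ^ c * 2 ^ (1-c)) * x ^ (((m:ℝ)+1)*c) := by
            rw [← h2split]
        _ < (2 ^ c * x ^ e) * x ^ (((m:ℝ)+1)*c) := by
            have := mul_lt_mul_of_pos_right (mul_lt_mul_of_pos_left h2e hp1) hp2
            exact this
        _ = 2 ^ c * x ^ ((n:ℝ)+1) := by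
            rw [hxsplit]
            ring
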